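/- Over a field of characteristic zero, if f and g are nonzero binary forms of the same degree d with {f, g} = 0, then f and g are scalar multiples of each other. -/
import Mathlib


open MvPolynomial

/-- The first transvectant of two binary forms. -/
noncomputable def transvectant {k : Type*} [CommRing k]
    (f g : MvPolynomial (Fin 2) k) : MvPolynomial (Fin 2) k :=
  pderiv 0 f * pderiv 1 g - pderiv 1 f * pderiv 0 g

noncomputable def Phi (K : Type*) [CommSemiring K] :
    MvPolynomial (Fin 2) K →ₐ[K] Polynomial K :=
  aeval ![Polynomial.X, 1]

lemma Phi_monomial {K : Type*} [CommSemiring K] (m : Fin 2 →₀ ℕ) (a : K) :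
    Phi K (monomial m a) = Polynomial.C a * Polynomial.X ^ (m 0) := by
  rw [Phi, aeval_monomial]
  rw [Finsupp.prod_fintype _ _ (fun i => pow_zero _)]
  rw [Fin.prod_univ_two]
  simp [Polynomial.algebraMap_eq]

lemma euler_mono {K : Type*} [CommRing K] (m : Fin 2 →₀ ℕ) (a : K) {d : ℕ}
    (hd : m 0 + m 1 = d) :
    Polynomial.X * Phi K (pderiv 0 (monomial m a)) + Phi K (pderiv 1 (monomial m a)) =
      (d : K) • (Polynomial.C a * Polynomial.X ^ (m 0)) := by
  rw [pderiv_monomial, pderiv_monomial, Phi_monomial, Phi_monomial]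
  have h0 : ((m - Finsupp.single 1 1 : Fin 2 →₀ ℕ)) 0 = m 0 := by
    simp [Finsupp.tsub_apply, Finsupp.single_apply]
  have h1 : ((m - Finsupp.single 0 1 : Fin 2 →₀ ℕ)) 0 = m 0 - 1 := by
    simp [Finsupp.tsub_apply, Finsupp.single_apply]
  rw [h0, h1, ← hd]
  rcases Nat.eq_zero_or_pos (m 0) with h | h
  · simp [h, Polynomial.smul_eq_C_mul]
    ring
  · have : m 0 - 1 + 1 = m 0 := Nat.succ_pred_eq_of_pos h
    rw [Polynomial.smul_eq_C_mul]
    push_cast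
    rw [mul_comm Polynomial.X _, mul_assoc, ← pow_succ, this, Polynomial.C_mul,
      Polynomial.C_mul, Polynomial.C_add]
    ring

lemma mem_support_deg {K : Type*} [CommRing K] {f : MvPolynomial (Fin 2) K} {d : ℕ}
    (hf : f.IsHomogeneous d) {m : Fin 2 →₀ ℕ} (hm : coeff m f ≠ 0) :
    m 0 + m 1 = d := by
  have h1 := hf hm
  rw [← h1]
  simp [Finsupp.weight, Finsupp.linearCombination, Finsupp.sum]
  rw [Finset.sum_subset (Finset.subset_univ _)
    (fun i _ hi => by simp [Finsupp.notMem_support_iff.mp hi]), Fin.sum_univ_two]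

lemma euler_Phi {K : Type*} [CommRing K] {f : MvPolynomial (Fin 2) K} {d : ℕ}
    (hf : f.IsHomogeneous d) :
    Polynomial.X * Phi K (pderiv 0 f) + Phi K (pderiv 1 f) = (d : K) • Phi K f := by
  conv_lhs => rw [f.as_sum]
  conv_rhs => rw [f.as_sum]
  rw [map_sum (pderiv 0), map_sum (pderiv 1), map_sum (Phi K), map_sum (Phi K),
    map_sum (Phi K), Finset.mul_sum, Finset.smul_sum, ← Finset.sum_add_distrib]
  refine Finset.sum_congr rfl fun m hm => ?_
  rw [Phi_monomial]
  exact euler_mono m _ (mem_support_deg hf (mem_support_iff.mp hm))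

lemma Phi_coeff_eq {K : Type*} [CommRing K] {f : MvPolynomial (Fin 2) K} {d : ℕ}
    (hf : f.IsHomogeneous d) (m : Fin 2 →₀ ℕ) (hmd : m 0 + m 1 = d) :
    (Phi K f).coeff (m 0) = coeff m f := by
  conv_lhs => rw [f.as_sum, map_sum (Phi K)]
  simp_rw [Phi_monomial]
  rw [Polynomial.finset_sum_coeff]
  simp_rw [Polynomial.coeff_C_mul, Polynomial.coeff_X_pow]
  rw [Finset.sum_eq_single m]
  · simp
  · intro u hu hne
    have hud := mem_support_deg hf (mem_support_iff.mp hu)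
    have hne0 : ¬ (m 0 = u 0) := by
      intro he
      apply hne
      have h1 : u 1 = m 1 := by omega
      ext i
      fin_cases i
      · exact he.symm
      · exact h1
    simp only [if_neg hne0, mul_zero]
  · intro hm
    simp [notMem_support_iff.mp hm]

lemma eq_zero_of_Phi {K : Type*} [CommRing K] {f : MvPolynomial (Fin 2) K} {d : ℕ}
    (hf : f.IsHomogeneous d) (h : Phi K f = 0) : f = 0 := by
  ext m
  rw [coeff_zero]
  by_contra hc
  have hd := mem_support_deg hf hc
  have he := Phi_coeff_eq hf m hd
  rw [h, Polynomial.coeff_zero] at he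
  exact hc he.symm

lemma wronskian_poly {K : Type*} [Field K] [CharZero K] {F G : Polynomial K}
    (hF : F ≠ 0) (hG : G ≠ 0)
    (h : Polynomial.derivative F * G = F * Polynomial.derivative G) :
    ∃ c : K, c ≠ 0 ∧ G = Polynomial.C c * F := by
  classical
  have hD0 : EuclideanDomain.gcd F G ≠ 0 := fun h0 => hF (EuclideanDomain.gcd_eq_zero_iff.mp h0).1
  obtain ⟨F₁, hF₁⟩ := EuclideanDomain.gcd_dvd_left F G
  obtain ⟨G₁, hG₁⟩ := EuclideanDomain.gcd_dvd_right F G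
  set D := EuclideanDomain.gcd F G with hD
  have hF₁0 : F₁ ≠ 0 := fun h0 => hF (by rw [hF₁, h0, mul_zero])
  have hG₁0 : G₁ ≠ 0 := fun h0 => hG (by rw [hG₁, h0, mul_zero])
  have hcop : IsCoprime F₁ G₁ := by
    refine ⟨EuclideanDomain.gcdA F G, EuclideanDomain.gcdB F G, ?_⟩
    have key : D * (EuclideanDomain.gcdA F G * F₁ + EuclideanDomain.gcdB F G * G₁) = D * 1 := by
      rw [mul_one]
      calc D * (EuclideanDomain.gcdA F G * F₁ + EuclideanDomain.gcdB F G * G₁)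
          = F * EuclideanDomain.gcdA F G + G * EuclideanDomain.gcdB F G := by
            rw [hF₁, hG₁]; ring
        _ = D := (EuclideanDomain.gcd_eq_gcd_ab F G).symm
    exact mul_left_cancel₀ hD0 key
  have hrel : Polynomial.derivative F₁ * G₁ = F₁ * Polynomial.derivative G₁ := by
    have expand : Polynomial.derivative F * G - F * Polynomial.derivative G
        = D * D * (Polynomial.derivative F₁ * G₁ - F₁ * Polynomial.derivative G₁) := by
      rw [hF₁, hG₁, Polynomial.derivative_mul, Polynomial.derivative_mul]
      ring
    have hz : D * D * (Polynomial.derivative F₁ * G₁ - F₁ * Polynomial.derivative G₁) = 0 := by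
      rw [← expand, h, sub_self]
    exact sub_eq_zero.mp ((mul_eq_zero.mp hz).resolve_left (mul_ne_zero hD0 hD0))
  have hF₁' : Polynomial.derivative F₁ = 0 := by
    by_contra hne
    have hdvd : F₁ ∣ Polynomial.derivative F₁ :=
      hcop.dvd_of_dvd_mul_right ⟨Polynomial.derivative G₁, hrel⟩
    exact absurd (Polynomial.degree_le_of_dvd hdvd hne)
      (not_le.mpr (Polynomial.degree_derivative_lt hF₁0))
  have hG₁' : Polynomial.derivative G₁ = 0 := by
    have hz : F₁ * Polynomial.derivative G₁ = 0 := by rw [← hrel, hF₁', zero_mul]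
    exact (mul_eq_zero.mp hz).resolve_left hF₁0
  obtain ⟨a, ha⟩ : ∃ a, F₁ = Polynomial.C a := ⟨_, Polynomial.eq_C_of_derivative_eq_zero hF₁'⟩
  obtain ⟨b, hb⟩ : ∃ b, G₁ = Polynomial.C b := ⟨_, Polynomial.eq_C_of_derivative_eq_zero hG₁'⟩
  have ha0 : a ≠ 0 := fun h0 => hF₁0 (by rw [ha, h0, map_zero])
  have hb0 : b ≠ 0 := fun h0 => hG₁0 (by rw [hb, h0, map_zero])
  refine ⟨b / a, div_ne_zero hb0 ha0, ?_⟩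
  rw [hG₁, hF₁, hb, ha, ← mul_assoc, mul_comm (Polynomial.C (b/a)) D, mul_assoc,
    ← Polynomial.C_mul, div_mul_cancel₀ b ha0]

lemma deriv_Phi {K : Type*} [CommRing K] (f : MvPolynomial (Fin 2) K) :
    Polynomial.derivative (Phi K f) = Phi K (pderiv 0 f) := by
  induction f using MvPolynomial.induction_on with
  | C a => simp [Phi]
  | add p q hp hq => simp [map_add, hp, hq]
  | mul_X p i hp =>
    rw [map_mul, Polynomial.derivative_mul, pderiv_mul, map_add, map_mul, map_mul, hp]
    fin_cases i <;> simp [Phi, mul_comm]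

lemma homog_zero_eq_C {K : Type*} [CommRing K] {f : MvPolynomial (Fin 2) K}
    (hf : f.IsHomogeneous 0) : f = C (coeff 0 f) := by
  ext m
  rcases eq_or_ne m 0 with rfl | hm
  · simp
  · rw [hf.coeff_eq_zero (fun hc => hm ((Finsupp.degree_eq_zero_iff m).mp hc)), coeff_C,
      if_neg (Ne.symm hm)]

/-- Over an algebraically closed field of characteristic zero, if `f` and `g` are
nonzero binary forms of the same degree `d` with `{f, g} = 0`, then `f` and `g`
are scalar multiples of each other. -/
theorem transvectant_eq_zero_same_degree {K : Type*} [Field K] [IsAlgClosed K]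
    [CharZero K] (d : ℕ) (f g : MvPolynomial (Fin 2) K)
    (hf : f.IsHomogeneous d) (hg : g.IsHomogeneous d)
    (hf0 : f ≠ 0) (hg0 : g ≠ 0) (h : transvectant f g = 0) :
    ∃ c : K, c ≠ 0 ∧ g = c • f := by
  rcases Nat.eq_zero_or_pos d with rfl | hd
  · set a := coeff 0 f with ha
    set b := coeff 0 g with hb
    have hfC : f = C a := homog_zero_eq_C hf
    have hgC : g = C b := homog_zero_eq_C hg
    have ha0 : a ≠ 0 := fun h0 => hf0 (by rw [hfC, h0, map_zero])
    have hb0 : b ≠ 0 := fun h0 => hg0 (by rw [hgC, h0, map_zero])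
    refine ⟨b / a, div_ne_zero hb0 ha0, ?_⟩
    rw [hfC, hgC, MvPolynomial.smul_eq_C_mul, ← C_mul, div_mul_cancel₀ _ ha0]
  · have hF0 : Phi K f ≠ 0 := fun h0 => hf0 (eq_zero_of_Phi hf h0)
    have hG0 : Phi K g ≠ 0 := fun h0 => hg0 (eq_zero_of_Phi hg h0)
    have htr : pderiv 0 f * pderiv 1 g = pderiv 1 f * pderiv 0 g := sub_eq_zero.mp h
    have hPhi : Phi K (pderiv 0 f) * Phi K (pderiv 1 g)
        = Phi K (pderiv 1 f) * Phi K (pderiv 0 g) := by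
      rw [← map_mul, ← map_mul, htr]
    have hfy : Phi K (pderiv 1 f)
        = Polynomial.C (d : K) * Phi K f - Polynomial.X * Phi K (pderiv 0 f) := by
      rw [← Polynomial.smul_eq_C_mul, ← euler_Phi hf]; ring
    have hgy : Phi K (pderiv 1 g)
        = Polynomial.C (d : K) * Phi K g - Polynomial.X * Phi K (pderiv 0 g) := by
      rw [← Polynomial.smul_eq_C_mul, ← euler_Phi hg]; ring
    rw [hfy, hgy] at hPhi
    have hd0 : (d : K) ≠ 0 := Nat.cast_ne_zero.mpr hd.ne'
    have hW : Polynomial.derivative (Phi K f) * Phi K g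
        = Phi K f * Polynomial.derivative (Phi K g) := by
      have key : Polynomial.C (d : K) * (Phi K (pderiv 0 f) * Phi K g)
          = Polynomial.C (d : K) * (Phi K f * Phi K (pderiv 0 g)) := by
        linear_combination hPhi
      have hC0 : (Polynomial.C (d : K)) ≠ 0 := fun hc =>
        hd0 (by simpa using congrArg (fun p => Polynomial.coeff p 0) hc)
      rw [deriv_Phi, deriv_Phi]
      exact mul_left_cancel₀ hC0 key
    obtain ⟨c, hc0, hc⟩ := wronskian_poly hF0 hG0 hW
    refine ⟨c, hc0, ?_⟩
    have hhom : (g - c • f).IsHomogeneous d := by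
      refine hg.sub ?_
      exact (mem_homogeneousSubmodule d (c • f)).mp
        ((homogeneousSubmodule (Fin 2) K d).smul_mem c hf)
    have hz : Phi K (g - c • f) = 0 := by
      rw [map_sub, map_smul, hc, Polynomial.smul_eq_C_mul, sub_self]
    exact sub_eq_zero.mp (eq_zero_of_Phi hhom hz)
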